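/- First edge bound in the path model: Suppose the profile at time t equals G, i.e. ‖x_i(t) − x_{i+1}(t)‖ ≤ ε for every i ≥ 1, and let A_t = sup_{i ≥ 1} ‖x_i(t) − x_{i+1}(t)‖. Then ‖x_1(t+1) − x_2(t+1)‖ ≤ ((1 + α_1(t))/2) · A_t. -/

import Mathlib

/-- The update neighborhood of vertex `i ≥ 1` at time `t` in the mixed HK model under
group interaction on the path graph on `ℤ⁺` with edges `(i, i+1)`:
`N_i(t) = {j ∈ ℤ⁺ : j = i, or |i − j| = 1 and ‖x_i(t) − x_j(t)‖ ≤ ε}`. -/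
noncomputable def pathNbhd {d : ℕ} (ε : ℝ) (x : ℕ → ℕ → EuclideanSpace ℝ (Fin d))
    (t i : ℕ) : Finset ℕ :=
  (Finset.range (i + 2)).filter fun j =>
    1 ≤ j ∧ (j = i ∨ ((j = i + 1 ∨ j + 1 = i) ∧ ‖x t i - x t j‖ ≤ ε))

/-- **First edge bound in the path model.** If the profile at time `t` equals `G`,
then with `A_t = sup_{i ≥ 1} ‖x_i(t) − x_{i+1}(t)‖` one has
`‖x_1(t+1) − x_2(t+1)‖ ≤ ((1 + α_1(t))/2) · A_t`. -/
theorem first_edge_bound (d : ℕ) (hd : 1 ≤ d) (ε : ℝ) (hε : 0 < ε)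
    (x : ℕ → ℕ → EuclideanSpace ℝ (Fin d)) (α : ℕ → ℕ → ℝ)
    (hα : ∀ t i, α t i ∈ Set.Icc (0 : ℝ) 1)
    (hdyn : ∀ t i, 1 ≤ i → x (t + 1) i =
      α t i • x t i + ((1 - α t i) / ((pathNbhd ε x t i).card : ℝ)) •
        ∑ k ∈ pathNbhd ε x t i, x t k)
    (t : ℕ) (hprof : ∀ i, 1 ≤ i → ‖x t i - x t (i + 1)‖ ≤ ε) :
    ‖x (t + 1) 1 - x (t + 1) 2‖ ≤
      ((1 + α t 1) / 2) * ⨆ i : ℕ, ‖x t (i + 1) - x t (i + 2)‖ := by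
  have h12 : ‖x t 1 - x t 2‖ ≤ ε := hprof 1 le_rfl
  have h23 : ‖x t 2 - x t 3‖ ≤ ε := hprof 2 (by norm_num)
  have h21 : ‖x t 2 - x t 1‖ ≤ ε := by rwa [norm_sub_rev]
  have hN1 : pathNbhd ε x t 1 = {1, 2} := by
    ext j
    simp only [pathNbhd, Finset.mem_filter, Finset.mem_range, Finset.mem_insert,
      Finset.mem_singleton]
    constructor
    · rintro ⟨hj, hj1, h⟩; omega
    · rintro (rfl | rfl)
      · exact ⟨by norm_num, le_rfl, Or.inl rfl⟩
      · exact ⟨by norm_num, by norm_num, Or.inr ⟨Or.inl rfl, h12⟩⟩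
  have hN2 : pathNbhd ε x t 2 = {1, 2, 3} := by
    ext j
    simp only [pathNbhd, Finset.mem_filter, Finset.mem_range, Finset.mem_insert,
      Finset.mem_singleton]
    constructor
    · rintro ⟨hj, hj1, h⟩; omega
    · rintro (rfl | rfl | rfl)
      · exact ⟨by norm_num, by norm_num, Or.inr ⟨Or.inr rfl, h21⟩⟩
      · exact ⟨by norm_num, by norm_num, Or.inl rfl⟩
      · exact ⟨by norm_num, by norm_num, Or.inr ⟨Or.inl rfl, h23⟩⟩
  have hx1 : x (t + 1) 1 = α t 1 • x t 1 + ((1 - α t 1) / 2) • (x t 1 + x t 2) := by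
    rw [hdyn t 1 le_rfl, hN1]
    norm_num [Finset.sum_insert, Finset.card_insert_of_notMem]
  have hx2 : x (t + 1) 2 = α t 2 • x t 2 + ((1 - α t 2) / 3) • (x t 1 + x t 2 + x t 3) := by
    rw [hdyn t 2 (by norm_num), hN2]
    norm_num [Finset.sum_insert, Finset.card_insert_of_notMem, add_assoc]
  set a := α t 1 with ha
  set b := α t 2 with hb
  obtain ⟨ha0, ha1⟩ := hα t 1
  obtain ⟨hb0, hb1⟩ := hα t 2
  set c1 : ℝ := (1 + a) / 2 - (1 - b) / 3 with hc1
  set c2 : ℝ := (1 - b) / 3 with hc2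
  have hkey : x (t + 1) 1 - x (t + 1) 2 = c1 • (x t 1 - x t 2) + c2 • (x t 2 - x t 3) := by
    rw [hx1, hx2, hc1, hc2]
    module
  have hbdd : BddAbove (Set.range fun i : ℕ => ‖x t (i + 1) - x t (i + 2)‖) := by
    refine ⟨ε, ?_⟩
    rintro _ ⟨i, rfl⟩
    exact hprof (i + 1) (by omega)
  set A : ℝ := ⨆ i : ℕ, ‖x t (i + 1) - x t (i + 2)‖ with hA
  have he1 : ‖x t 1 - x t 2‖ ≤ A := le_ciSup hbdd 0
  have he2 : ‖x t 2 - x t 3‖ ≤ A := le_ciSup hbdd 1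
  have hc1n : (0 : ℝ) ≤ c1 := by rw [hc1]; linarith
  have hc2n : (0 : ℝ) ≤ c2 := by rw [hc2]; linarith
  have hA0 : (0 : ℝ) ≤ A := le_trans (norm_nonneg _) he1
  calc ‖x (t + 1) 1 - x (t + 1) 2‖
      ≤ ‖c1 • (x t 1 - x t 2)‖ + ‖c2 • (x t 2 - x t 3)‖ := by
        rw [hkey]; exact norm_add_le _ _
    _ = c1 * ‖x t 1 - x t 2‖ + c2 * ‖x t 2 - x t 3‖ := by
        rw [norm_smul, norm_smul, Real.norm_eq_abs, Real.norm_eq_abs,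
          abs_of_nonneg hc1n, abs_of_nonneg hc2n]
    _ ≤ c1 * A + c2 * A := by
        gcongr
    _ = ((1 + a) / 2) * A := by rw [hc1, hc2]; ring
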